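/- In B_n, for h > i > j > k, the band generator and descending cycle satisfy (i,j) δ_{h,k} = δ_{h,k} (i+1,j+1). -/

import Mathlib

/-- Artin relations for the braid group `B_n`, with generators `σ_1, …, σ_{n-1}`
(indexed by natural numbers; generators with index `0` or `≥ n` are killed). -/
def braidRels (n : ℕ) : Set (FreeGroup ℕ) :=
  {x | (∃ i j : ℕ, 1 ≤ i ∧ i + 2 ≤ j ∧ j + 1 ≤ n ∧
        x = FreeGroup.of i * FreeGroup.of j * (FreeGroup.of i)⁻¹ * (FreeGroup.of j)⁻¹) ∨
      (∃ i : ℕ, 1 ≤ i ∧ i + 2 ≤ n ∧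
        x = FreeGroup.of i * FreeGroup.of (i+1) * FreeGroup.of i *
            (FreeGroup.of (i+1) * FreeGroup.of i * FreeGroup.of (i+1))⁻¹) ∨
      (∃ i : ℕ, (i = 0 ∨ n ≤ i) ∧ x = FreeGroup.of i)}

/-- The braid group `B_n` with the Artin presentation. -/
def BraidGroup (n : ℕ) : Type := PresentedGroup (braidRels n)

instance (n : ℕ) : Group (BraidGroup n) :=
  inferInstanceAs (Group (PresentedGroup (braidRels n)))

/-- The Artin generator `σ_k` of `B_n`. -/
def σb (n k : ℕ) : BraidGroup n := PresentedGroup.of (rels := braidRels n) k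

/-- The product `σ_{i-1} σ_{i-2} ⋯ σ_{j+1}` in `B_n`. -/
def chain (n i j : ℕ) : BraidGroup n :=
  ((List.range' (j+1) (i-1-j)).reverse.map (σb n)).prod

/-- The band generator `(i,j) = (σ_{i-1} ⋯ σ_{j+1}) σ_j (σ_{i-1} ⋯ σ_{j+1})⁻¹` of `B_n`. -/
def band (n i j : ℕ) : BraidGroup n := chain n i j * σb n j * (chain n i j)⁻¹

/-- The descending cycle `δ_{p,q} = (p,p-1)(p-1,p-2)⋯(q+1,q)` in `B_n`. -/
def descCycle (n p q : ℕ) : BraidGroup n :=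
  ((List.range' q (p - q)).reverse.map fun k => band n (k + 1) k).prod

lemma braid_rel_one {n : ℕ} {x : FreeGroup ℕ} (hx : x ∈ braidRels n) :
    (PresentedGroup.mk (braidRels n) x : BraidGroup n) = 1 := by
  have : x ∈ Subgroup.normalClosure (braidRels n) := Subgroup.subset_normalClosure hx
  exact (QuotientGroup.eq_one_iff x).mpr this

lemma σb_eq_one {n a : ℕ} (h : a = 0 ∨ n ≤ a) : σb n a = 1 :=
  braid_rel_one (Or.inr (Or.inr ⟨a, h, rfl⟩))

lemma σb_comm {n : ℕ} {a b : ℕ} (h : a + 2 ≤ b) : σb n a * σb n b = σb n b * σb n a := by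
  rcases Nat.eq_zero_or_pos a with ha | ha
  · rw [σb_eq_one (Or.inl ha)]; simp
  rcases le_or_gt n b with hb | hb
  · rw [σb_eq_one (n := n) (Or.inr hb)]; simp
  have key : (PresentedGroup.mk (braidRels n)
      (FreeGroup.of a * FreeGroup.of b * (FreeGroup.of a)⁻¹ * (FreeGroup.of b)⁻¹) :
      BraidGroup n) = 1 :=
    braid_rel_one (Or.inl ⟨a, b, ha, h, hb, rfl⟩)
  simp only [map_mul, map_inv] at key
  have h1 : σb n a * σb n b * (σb n a)⁻¹ = σb n b := mul_inv_eq_one.mp key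
  exact mul_inv_eq_iff_eq_mul.mp h1

lemma σb_braid {n a : ℕ} (h1 : 1 ≤ a) (h2 : a + 2 ≤ n) :
    σb n a * σb n (a+1) * σb n a = σb n (a+1) * σb n a * σb n (a+1) := by
  have key : (PresentedGroup.mk (braidRels n)
      (FreeGroup.of a * FreeGroup.of (a+1) * FreeGroup.of a *
        (FreeGroup.of (a+1) * FreeGroup.of a * FreeGroup.of (a+1))⁻¹) : BraidGroup n) = 1 :=
    braid_rel_one (Or.inr (Or.inl ⟨a, h1, h2, rfl⟩))
  simp only [map_mul, map_inv] at key
  exact mul_inv_eq_one.mp key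

/-- The product `σ_{h-1} σ_{h-2} ⋯ σ_k`. -/
def dprod (n h k : ℕ) : BraidGroup n := ((List.range' k (h-k)).reverse.map (σb n)).prod

lemma range'_map_succ (s m : ℕ) :
    (List.range' s m).map (fun t => t + 1) = List.range' (s+1) m := by
  induction m generalizing s with
  | zero => simp
  | succ m ih => rw [List.range'_succ, List.range'_succ, List.map_cons, ih]

lemma dprod_succ {n h k : ℕ} (hkh : k ≤ h) : dprod n (h+1) k = σb n h * dprod n h k := by
  unfold dprod
  have h1 : h + 1 - k = (h - k) + 1 := by omega
  rw [h1, List.range'_concat]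
  simp only [one_mul]
  have h2 : k + (h - k) = h := by omega
  rw [h2, List.reverse_append]
  simp

lemma comm_sigma_list {n b : ℕ} (l : List ℕ) (hmem : ∀ t ∈ l, t + 2 ≤ b) :
    σb n b * (l.map (σb n)).prod = (l.map (σb n)).prod * σb n b := by
  induction l with
  | nil => simp
  | cons a l ih =>
    have hcomm : σb n a * σb n b = σb n b * σb n a :=
      σb_comm (hmem a List.mem_cons_self)
    simp only [List.map_cons, List.prod_cons, ← mul_assoc, ← hcomm]
    rw [mul_assoc, ih (fun t ht => hmem t (List.mem_cons_of_mem _ ht)), ← mul_assoc]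

lemma comm_dprod {n b p q : ℕ} (hb : p + 1 ≤ b) :
    σb n b * dprod n p q = dprod n p q * σb n b := by
  refine comm_sigma_list _ (fun t ht => ?_)
  rw [List.mem_reverse, List.mem_range'_1] at ht
  omega

lemma sigma_shift {n h k m : ℕ} (hm1 : 1 ≤ m) (hkm : k ≤ m) (hmh : m + 2 ≤ h) (hhn : h ≤ n) :
    σb n m * dprod n h k = dprod n h k * σb n (m+1) := by
  induction h with
  | zero => omega
  | succ h ih =>
    rcases Nat.lt_or_ge (m+2) (h+1) with hlt | hge
    · -- h ≥ m + 2
      have hh : m + 2 ≤ h := by omega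
      rw [dprod_succ (by omega), ← mul_assoc, σb_comm (by omega : m + 2 ≤ h),
        mul_assoc, ih hh (by omega), ← mul_assoc]
    · -- h + 1 = m + 2
      have hh : h = m + 1 := by omega
      subst hh
      rw [dprod_succ (by omega), dprod_succ (by omega), ← mul_assoc, ← mul_assoc,
        σb_braid hm1 (by omega)]
      rw [mul_assoc, mul_assoc, comm_dprod (by omega : m + 1 ≤ m + 1)]
      simp only [mul_assoc]

lemma list_shift {n h k : ℕ} (l : List ℕ)
    (hl : ∀ t ∈ l, 1 ≤ t ∧ k ≤ t ∧ t + 2 ≤ h) (hhn : h ≤ n) :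
    (l.map (σb n)).prod * dprod n h k
      = dprod n h k * ((l.map (fun t => t + 1)).map (σb n)).prod := by
  induction l with
  | nil => simp
  | cons a l ih =>
    obtain ⟨h1, h2, h3⟩ := hl a List.mem_cons_self
    simp only [List.map_cons, List.prod_cons, mul_assoc]
    rw [ih (fun t ht => hl t (List.mem_cons_of_mem _ ht)), ← mul_assoc,
      sigma_shift h1 h2 h3 hhn, mul_assoc]


lemma band_succ (n t : ℕ) : band n (t+1) t = σb n t := by
  have h0 : t + 1 - 1 - t = 0 := by omega
  simp [band, chain, h0]

lemma descCycle_eq (n h k : ℕ) : descCycle n h k = dprod n h k := by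
  unfold descCycle dprod
  simp only [band_succ]

lemma chain_shift {n h i j k : ℕ} (hkj : k < j) (hji : j < i) (hih : i < h) (hhn : h ≤ n) :
    chain n i j * dprod n h k = dprod n h k * chain n (i+1) (j+1) := by
  have key := list_shift (n := n) (h := h) (k := k) ((List.range' (j+1) (i-1-j)).reverse)
    (fun t ht => by
      rw [List.mem_reverse, List.mem_range'_1] at ht
      omega) hhn
  unfold chain
  rw [key]
  have harith : i + 1 - 1 - (j + 1) = i - 1 - j := by omega
  rw [List.map_reverse, range'_map_succ, harith]

/-- for `h > i > j > k`, `(i,j) δ_{h,k} = δ_{h,k} (i+1,j+1)` in `B_n`. -/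
theorem band_descCycle (n h i j k : ℕ)
    (hk : 1 ≤ k) (hkj : k < j) (hji : j < i) (hih : i < h) (hhn : h ≤ n) :
    band n i j * descCycle n h k = descCycle n h k * band n (i + 1) (j + 1) := by
  rw [descCycle_eq]
  set D := dprod n h k with hD
  have C1 : chain n i j * D = D * chain n (i+1) (j+1) := chain_shift hkj hji hih hhn
  have C2 : σb n j * D = D * σb n (j+1) :=
    sigma_shift (by omega) (by omega) (by omega) hhn
  have C1' : (chain n i j)⁻¹ * D = D * (chain n (i+1) (j+1))⁻¹ := by
    rw [eq_comm, mul_inv_eq_iff_eq_mul, mul_assoc, ← C1, ← mul_assoc, inv_mul_cancel, one_mul]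
  unfold band
  simp only [mul_assoc]
  rw [C1', ← mul_assoc (σb n j), C2, mul_assoc, ← mul_assoc (chain n i j), C1]
  simp only [mul_assoc]
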